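/- Composite square-root estimate: Let S_ρ and S_τ be positive bounded selfadjoint operators on a complex Hilbert space ℋ with 0 ≤ S_ρ ≤ (1+ε)Id and 0 ≤ S_τ ≤ (1+ε)Id for some 0 < ε ≤ 1/2. If ψ is a unit vector with ‖(S_ρ − Id)ψ‖ ≤ 3ε and ‖(S_τ − Id)ψ‖ ≤ 3ε, then ‖√S_ρ √S_τ ψ − ψ‖ ≤ 4√ε, where √S denotes the positive square root. -/

import Mathlib

open ContinuousLinearMap RCLike

local notation "⟪" x ", " y "⟫" => @inner ℂ _ _ x y

/-- For a positive square root `R` of `S` with `S ≤ (1+ε)·Id`: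
`‖R φ‖² ≤ (1+ε)‖φ‖²`. -/
lemma sqrt_norm_sq_bound
    {H : Type*} [NormedAddCommGroup H] [InnerProductSpace ℂ H] [CompleteSpace H]
    (S R : H →L[ℂ] H) (ε : ℝ)
    (hSle : ((((1 + ε : ℝ) : ℂ) • (1 : H →L[ℂ] H)) - S).IsPositive)
    (hRpos : R.IsPositive) (hR : R.comp R = S) (φ : H) :
    ‖R φ‖ ^ 2 ≤ (1 + ε) * ‖φ‖ ^ 2 := by
  have hsym := hRpos.1
  have hS : S φ = R (R φ) := by rw [← hR]; rfl
  have h1 : ‖R φ‖ ^ 2 = re ⟪S φ, φ⟫ := by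
    rw [← inner_self_eq_norm_sq (𝕜 := ℂ), hS]
    exact congrArg re (hsym (R φ) φ).symm
  have h2 : 0 ≤ re ⟪(((((1 + ε : ℝ) : ℂ) • (1 : H →L[ℂ] H)) - S)) φ, φ⟫ :=
    (RCLike.nonneg_iff.mp (hSle.inner_nonneg_left φ)).1
  have h3 : re ⟪(((((1 + ε : ℝ) : ℂ) • (1 : H →L[ℂ] H)) - S)) φ, φ⟫
      = (1 + ε) * ‖φ‖ ^ 2 - re ⟪S φ, φ⟫ := by
    have e1 : ((((1 + ε : ℝ) : ℂ) • (1 : H →L[ℂ] H)) - S) φ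
        = (((1 + ε : ℝ) : ℂ)) • φ - S φ := rfl
    rw [e1, inner_sub_left, map_sub, inner_smul_left]
    congr 1
    rw [inner_self_eq_norm_sq_to_K (𝕜 := ℂ)]
    simp [Complex.conj_ofReal, ← Complex.ofReal_pow, ← Complex.ofReal_mul]
  rw [h1]
  linarith [h2, h3.symm ▸ h2]

/-- If `R` is a positive square root of `S` then `‖Rψ - ψ‖ ≤ ‖Sψ - ψ‖`. -/
lemma sqrt_dist_bound
    {H : Type*} [NormedAddCommGroup H] [InnerProductSpace ℂ H] [CompleteSpace H]
    (S R : H →L[ℂ] H)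
    (hRpos : R.IsPositive) (hR : R.comp R = S) (ψ : H) :
    ‖R ψ - ψ‖ ≤ ‖S ψ - ψ‖ := by
  set v := R ψ - ψ with hv
  have hS : S ψ = R (R ψ) := by rw [← hR]; rfl
  have key : S ψ - ψ = R v + v := by
    rw [hS, hv]; rw [map_sub]; abel
  have h1 : re ⟪S ψ - ψ, v⟫ = re ⟪R v, v⟫ + ‖v‖ ^ 2 := by
    rw [key, inner_add_left, map_add, inner_self_eq_norm_sq]
  have h2 : 0 ≤ re ⟪R v, v⟫ := (RCLike.nonneg_iff.mp (hRpos.inner_nonneg_left v)).1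
  have h3 : re ⟪S ψ - ψ, v⟫ ≤ ‖S ψ - ψ‖ * ‖v‖ := re_inner_le_norm _ _
  have h4 : ‖v‖ ^ 2 ≤ ‖S ψ - ψ‖ * ‖v‖ := by linarith
  rcases eq_or_lt_of_le (norm_nonneg v) with h | h
  · rw [← h]; exact norm_nonneg _
  · nlinarith

set_option maxHeartbeats 1000000 in
/-- **Composite square-root estimate.**
Let `S_ρ`, `S_τ` be positive bounded selfadjoint operators with
`0 ≤ S_ρ, S_τ ≤ (1+ε)Id` for some `0 < ε ≤ 1/2`, and let `R_ρ = √S_ρ`,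
`R_τ = √S_τ` be their positive square roots (positive selfadjoint operators
squaring to `S_ρ`, `S_τ`).  If `ψ` is a unit vector with `‖(S_ρ − Id)ψ‖ ≤ 3ε`
and `‖(S_τ − Id)ψ‖ ≤ 3ε`, then `‖√S_ρ √S_τ ψ − ψ‖ ≤ 4√ε`. -/
theorem composite_sqrt_estimate
    {H : Type*} [NormedAddCommGroup H] [InnerProductSpace ℂ H] [CompleteSpace H]
    (Sρ Sτ Rρ Rτ : H →L[ℂ] H) (ε : ℝ) (hε0 : 0 < ε) (hε1 : ε ≤ 1 / 2)
    (hSρpos : Sρ.IsPositive)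
    (hSρle : ((((1 + ε : ℝ) : ℂ) • (1 : H →L[ℂ] H)) - Sρ).IsPositive)
    (hSτpos : Sτ.IsPositive)
    (hSτle : ((((1 + ε : ℝ) : ℂ) • (1 : H →L[ℂ] H)) - Sτ).IsPositive)
    (hRρpos : Rρ.IsPositive) (hRρ : Rρ.comp Rρ = Sρ)
    (hRτpos : Rτ.IsPositive) (hRτ : Rτ.comp Rτ = Sτ)
    (ψ : H) (hψ : ‖ψ‖ = 1)
    (hψρ : ‖Sρ ψ - ψ‖ ≤ 3 * ε) (hψτ : ‖Sτ ψ - ψ‖ ≤ 3 * ε) :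
    ‖Rρ (Rτ ψ) - ψ‖ ≤ 4 * Real.sqrt ε := by
  have ha : ‖Rτ ψ - ψ‖ ≤ 3 * ε := le_trans (sqrt_dist_bound Sτ Rτ hRτpos hRτ ψ) hψτ
  have hb : ‖Rρ ψ - ψ‖ ≤ 3 * ε := le_trans (sqrt_dist_bound Sρ Rρ hRρpos hRρ ψ) hψρ
  set s := Real.sqrt ε with hs
  have hs0 : 0 ≤ s := Real.sqrt_nonneg ε
  have hs2 : s ^ 2 = ε := Real.sq_sqrt hε0.le
  -- norm bound on Rρ applied to any vector, and on Rτ ψ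
  have hRρn : ∀ φ : H, ‖Rρ φ‖ ^ 2 ≤ (1 + ε) * ‖φ‖ ^ 2 :=
    fun φ => sqrt_norm_sq_bound Sρ Rρ ε hSρle hRρpos hRρ φ
  have hRτn : ‖Rτ ψ‖ ^ 2 ≤ (1 + ε) * ‖ψ‖ ^ 2 :=
    sqrt_norm_sq_bound Sτ Rτ ε hSτle hRτpos hRτ ψ
  rcases le_or_gt ε (7/20) with hcase | hcase
  · -- small ε: triangle inequality route
    have h1 : ‖Rρ (Rτ ψ) - ψ‖ ≤ ‖Rρ (Rτ ψ - ψ)‖ + ‖Rρ ψ - ψ‖ := by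
      have : Rρ (Rτ ψ) - ψ = Rρ (Rτ ψ - ψ) + (Rρ ψ - ψ) := by rw [map_sub]; abel
      rw [this]; exact norm_add_le _ _
    have h2 : ‖Rρ (Rτ ψ - ψ)‖ ^ 2 ≤ (1 + ε) * ‖Rτ ψ - ψ‖ ^ 2 := hRρn _
    -- √(1+ε) ≤ 117/100 since (117/100)^2 ≥ 1 + 7/20
    have h3 : ‖Rρ (Rτ ψ - ψ)‖ ≤ (117/100) * (3 * ε) := by
      nlinarith [norm_nonneg (Rρ (Rτ ψ - ψ)), norm_nonneg (Rτ ψ - ψ), hε0.le]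
    -- s ≥ ... : 6.51 ε ≤ 4 s
    have h4 : (117/100) * (3 * ε) + 3 * ε ≤ 4 * s := by
      nlinarith [hs0, hs2, hcase, hε0.le]
    linarith
  · -- large ε: trivial norm bound
    have h1 : ‖Rρ (Rτ ψ) - ψ‖ ≤ ‖Rρ (Rτ ψ)‖ + ‖ψ‖ := norm_sub_le _ _
    have h2 : ‖Rρ (Rτ ψ)‖ ^ 2 ≤ (1 + ε) * ‖Rτ ψ‖ ^ 2 := hRρn _
    have hy : ‖Rτ ψ‖ ^ 2 ≤ 1 + ε := by rw [hψ] at hRτn; simpa using hRτn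
    have hx2 : ‖Rρ (Rτ ψ)‖ ^ 2 ≤ (1 + ε) ^ 2 := by nlinarith [hε0.le]
    have h3 : ‖Rρ (Rτ ψ)‖ ≤ 1 + ε := by
      nlinarith [hx2, norm_nonneg (Rρ (Rτ ψ)), hε0.le]
    have h5 : (59:ℝ)/100 ≤ s := by nlinarith
    have h6 : s ≤ 708/1000 := by nlinarith
    have hprod : (0:ℝ) ≤ (s - 59/100) * (708/1000 - s) :=
      mul_nonneg (by linarith) (by linarith)
    have h7 : 2 + ε ≤ 4 * s := by nlinarith [hprod]
    linarith [h1, h3, h7, hψ.le, hψ.ge]
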